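/- There exists a proper convex function g : ℝ → ℝ∪{+∞} that is not lower semicontinuous but whose subdifferential ∂g is maximal monotone. -/

import Mathlib

open scoped Topology

section Defs

variable {X : Type*} [AddCommGroup X] [Module ℝ X] [TopologicalSpace X]

/-- `p ∈ ∂f(x)`: `f x` is finite and `f y ≥ f x + ⟨y - x, p⟩` for all `y`. -/
def IsSubgrad (f : X → EReal) (x : X) (p : X →L[ℝ] ℝ) : Prop :=
  f x ≠ ⊤ ∧ f x ≠ ⊥ ∧ ∀ y, f x + (p (y - x) : EReal) ≤ f y

/-- Graph of the convex subdifferential of `f`. -/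
def graphSub (f : X → EReal) : Set (X × (X →L[ℝ] ℝ)) :=
  {q | IsSubgrad f q.1 q.2}

/-- Domain `D(∂f)` of the subdifferential. -/
def subdiffDom (f : X → EReal) : Set X := {x | ∃ p, IsSubgrad f x p}

/-- Range `R(∂f)` of the subdifferential. -/
def subdiffRan (f : X → EReal) : Set (X →L[ℝ] ℝ) := {p | ∃ x, IsSubgrad f x p}

/-- Monotone subset of `X × X*`. -/
def MonotoneSet (S : Set (X × (X →L[ℝ] ℝ))) : Prop :=
  ∀ a ∈ S, ∀ b ∈ S, 0 ≤ a.2 (a.1 - b.1) - b.2 (a.1 - b.1)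

/-- Maximal monotone subset of `X × X*` (maximal w.r.t. graph inclusion). -/
def MaxMonotoneSet (S : Set (X × (X →L[ℝ] ℝ))) : Prop :=
  MonotoneSet S ∧ ∀ T, MonotoneSet T → S ⊆ T → T = S

/-- Proper function: never `−∞` and not identically `+∞`. -/
def ProperE {Y : Type*} (f : Y → EReal) : Prop :=
  (∃ x, f x ≠ ⊤) ∧ ∀ x, f x ≠ ⊥

/-- Convexity of an extended-real-valued function via its epigraph. -/
def ConvexEpi (f : X → EReal) : Prop :=
  Convex ℝ {q : X × ℝ | f q.1 ≤ (q.2 : EReal)}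

/-- The lsc convex hull: the greatest lsc convex function majorized by `f`. -/
noncomputable def lscConvHull (f : X → EReal) : X → EReal := fun x =>
  sSup {v | ∃ g : X → EReal, ConvexEpi g ∧ LowerSemicontinuous g ∧ g ≤ f ∧ v = g x}

/-- Convex conjugate w.r.t. the dual system `(X, X*)`. -/
noncomputable def conjE (f : X → EReal) (p : X →L[ℝ] ℝ) : EReal :=
  ⨆ x, ((p x : EReal) - f x)

/-- Biconjugate `f**`. -/
noncomputable def biconjE (f : X → EReal) (x : X) : EReal :=
  ⨆ p : X →L[ℝ] ℝ, ((p x : EReal) - conjE f p)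

/-- Fitzpatrick function of `∂f`. -/
noncomputable def fitzSub (f : X → EReal) (x : X) (p : X →L[ℝ] ℝ) : EReal :=
  ⨆ a, ⨆ s, ⨆ _ : IsSubgrad f a s, ((s (x - a) + p a : ℝ) : EReal)

/-- Upper envelope `f^∪(x) = sup{⟨x−a, a*⟩ + f(a) : (a,a*) ∈ Graph ∂f}`. -/
noncomputable def upperEnv (f : X → EReal) (x : X) : EReal :=
  ⨆ a, ⨆ s, ⨆ _ : IsSubgrad f a s, ((s (x - a) : EReal) + f a)

end Defs


noncomputable def myg : ℝ → EReal := fun x => if 0 < x then ((-Real.sqrt x : ℝ) : EReal) else ⊤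

lemma myg_pos {x : ℝ} (hx : 0 < x) : myg x = ((-Real.sqrt x : ℝ) : EReal) := if_pos hx
lemma myg_nonpos {x : ℝ} (hx : ¬ 0 < x) : myg x = ⊤ := if_neg hx

lemma apply_eq (p : ℝ →L[ℝ] ℝ) (t : ℝ) : p t = t * p 1 := by
  rw [← smul_eq_mul, ← map_smul, smul_eq_mul, mul_one]

lemma isSubgrad_myg_iff (x : ℝ) (p : ℝ →L[ℝ] ℝ) :
    IsSubgrad myg x p ↔ 0 < x ∧ p 1 = -(1 / (2 * Real.sqrt x)) := by
  constructor
  · rintro ⟨htop, -, hle⟩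
    have hx : 0 < x := by
      by_contra h; exact htop (myg_nonpos h)
    have hsx : 0 < Real.sqrt x := Real.sqrt_pos.2 hx
    refine ⟨hx, ?_⟩
    have key : ∀ y : ℝ, 0 < y → -Real.sqrt x + (y - x) * p 1 ≤ -Real.sqrt y := by
      intro y hy
      have := hle y
      rw [myg_pos hx, myg_pos hy, apply_eq] at this
      exact_mod_cast this
    have hub : ∀ y : ℝ, x < y → p 1 ≤ -(1 / (Real.sqrt x + Real.sqrt y)) := by
      intro y hxy
      have hy : 0 < y := hx.trans hxy
      have h := key y hy
      have hs : Real.sqrt x ^ 2 = x := Real.sq_sqrt hx.le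
      have ht : Real.sqrt y ^ 2 = y := Real.sq_sqrt hy.le
      have hty : 0 < Real.sqrt y := Real.sqrt_pos.2 hy
      have hst : Real.sqrt x < Real.sqrt y := (Real.sqrt_lt_sqrt hx.le hxy)
      have hpos : 0 < Real.sqrt x + Real.sqrt y := by positivity
      rw [le_neg, div_le_iff₀ hpos]
      nlinarith
    have hlb : ∀ y : ℝ, 0 < y → y < x → -(1 / (Real.sqrt x + Real.sqrt y)) ≤ p 1 := by
      intro y hy hxy
      have h := key y hy
      have hs : Real.sqrt x ^ 2 = x := Real.sq_sqrt hx.le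
      have ht : Real.sqrt y ^ 2 = y := Real.sq_sqrt hy.le
      have hty : 0 < Real.sqrt y := Real.sqrt_pos.2 hy
      have hst : Real.sqrt y < Real.sqrt x := (Real.sqrt_lt_sqrt hy.le hxy)
      have hpos : 0 < Real.sqrt x + Real.sqrt y := by positivity
      rw [neg_le, le_div_iff₀ hpos]
      nlinarith
    have htend : Filter.Tendsto (fun y : ℝ => -(1 / (Real.sqrt x + Real.sqrt y)))
        (𝓝 x) (𝓝 (-(1 / (2 * Real.sqrt x)))) := by
      have h1 : ContinuousAt (fun y : ℝ => -(1 / (Real.sqrt x + Real.sqrt y))) x := by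
        have hc : ContinuousAt Real.sqrt x := Real.continuous_sqrt.continuousAt
        have hne : Real.sqrt x + Real.sqrt x ≠ 0 := by positivity
        fun_prop (disch := assumption)
      have := h1.tendsto
      simpa [two_mul] using this
    have h1 : p 1 ≤ -(1 / (2 * Real.sqrt x)) := by
      refine ge_of_tendsto (htend.mono_left (nhdsWithin_le_nhds (s := Set.Ioi x))) ?_
      filter_upwards [self_mem_nhdsWithin] with y (hy : y ∈ Set.Ioi x)
      exact hub y hy
    have h2 : -(1 / (2 * Real.sqrt x)) ≤ p 1 := by
      refine le_of_tendsto (htend.mono_left (nhdsWithin_le_nhds (s := Set.Iio x))) ?_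
      filter_upwards [self_mem_nhdsWithin,
        ((eventually_gt_nhds hx).filter_mono nhdsWithin_le_nhds)] with y (hy : y ∈ Set.Iio x) hy0
      exact hlb y hy0 hy
    exact le_antisymm h1 h2
  · rintro ⟨hx, hp⟩
    have hsx : 0 < Real.sqrt x := Real.sqrt_pos.2 hx
    refine ⟨by rw [myg_pos hx]; exact EReal.coe_ne_top _,
      by rw [myg_pos hx]; exact EReal.coe_ne_bot _, ?_⟩
    intro y
    by_cases hy : 0 < y
    · rw [myg_pos hx, myg_pos hy, apply_eq, hp]
      have hs : Real.sqrt x ^ 2 = x := Real.sq_sqrt hx.le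
      have ht : Real.sqrt y ^ 2 = y := Real.sq_sqrt hy.le
      have hty : 0 ≤ Real.sqrt y := Real.sqrt_nonneg y
      have goal : -Real.sqrt x + (y - x) * -(1 / (2 * Real.sqrt x)) ≤ -Real.sqrt y := by
        have e : -Real.sqrt y - (-Real.sqrt x + (y - x) * -(1 / (2 * Real.sqrt x)))
            = (Real.sqrt x - Real.sqrt y) ^ 2 / (2 * Real.sqrt x) := by
          field_simp
          linear_combination hs - ht
        rw [← sub_nonneg, e]
        positivity
      exact_mod_cast goal
    · rw [myg_nonpos hy]; exact le_top

lemma contAux {a : ℝ} (ha : 0 < a) :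
    Filter.Tendsto (fun x : ℝ => -(1 / (2 * Real.sqrt x))) (𝓝 a) (𝓝 (-(1 / (2 * Real.sqrt a)))) := by
  have hc : ContinuousAt Real.sqrt a := Real.continuous_sqrt.continuousAt
  have hne : (2 : ℝ) * Real.sqrt a ≠ 0 := by
    have := Real.sqrt_pos.2 ha; positivity
  exact (ContinuousAt.neg (by fun_prop (disch := assumption))).tendsto

lemma myg_monotone : MonotoneSet (graphSub myg) := by
  rintro ⟨x, p⟩ hp ⟨y, q⟩ hq
  obtain ⟨hx, hpx⟩ := (isSubgrad_myg_iff x p).1 hp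
  obtain ⟨hy, hqy⟩ := (isSubgrad_myg_iff y q).1 hq
  simp only
  rw [apply_eq p, apply_eq q, hpx, hqy]
  have hs : Real.sqrt x ^ 2 = x := Real.sq_sqrt hx.le
  have ht : Real.sqrt y ^ 2 = y := Real.sq_sqrt hy.le
  have hsx : 0 < Real.sqrt x := Real.sqrt_pos.2 hx
  have hty : 0 < Real.sqrt y := Real.sqrt_pos.2 hy
  have e1 : (x - y) * -(1 / (2 * Real.sqrt x)) - (x - y) * -(1 / (2 * Real.sqrt y))
      = (x - y) * (Real.sqrt x - Real.sqrt y) / (2 * Real.sqrt x * Real.sqrt y) := by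
    field_simp
    ring
  have e2 : (x - y) * (Real.sqrt x - Real.sqrt y)
      = (Real.sqrt x - Real.sqrt y) ^ 2 * (Real.sqrt x + Real.sqrt y) := by
    linear_combination (Real.sqrt y - Real.sqrt x) * hs + (Real.sqrt x - Real.sqrt y) * ht
  rw [e1, e2]
  positivity

lemma myg_max : ∀ T, MonotoneSet T → graphSub myg ⊆ T → T = graphSub myg := by
  intro T hT hsub
  refine Set.Subset.antisymm ?_ hsub
  rintro ⟨a, p⟩ haT
  have mono : ∀ x : ℝ, 0 < x → 0 ≤ (p 1 + 1 / (2 * Real.sqrt x)) * (a - x) := by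
    intro x hx
    set s : ℝ →L[ℝ] ℝ := (-(1 / (2 * Real.sqrt x))) • ContinuousLinearMap.id ℝ ℝ with hs
    have hs1 : s 1 = -(1 / (2 * Real.sqrt x)) := by
      simp [hs]
    have hsg : (x, s) ∈ graphSub myg := (isSubgrad_myg_iff x s).2 ⟨hx, hs1⟩
    have := hT (a, p) haT (x, s) (hsub hsg)
    simp only at this
    rw [apply_eq p, apply_eq s, hs1] at this
    nlinarith [this]
  by_cases ha : 0 < a
  · -- show p 1 = -(1/(2 √a)) and conclude
    have h1 : p 1 ≤ -(1 / (2 * Real.sqrt a)) := by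
      refine ge_of_tendsto ((contAux ha).mono_left (nhdsWithin_le_nhds (s := Set.Ioi a))) ?_
      filter_upwards [self_mem_nhdsWithin] with x (hx : x ∈ Set.Ioi a)
      have hx0 : 0 < x := ha.trans hx
      have h := mono x hx0
      have hax : a - x < 0 := by simpa using sub_neg.2 (Set.mem_Ioi.1 hx)
      nlinarith
    have h2 : -(1 / (2 * Real.sqrt a)) ≤ p 1 := by
      refine le_of_tendsto ((contAux ha).mono_left (nhdsWithin_le_nhds (s := Set.Iio a))) ?_
      filter_upwards [self_mem_nhdsWithin,
        ((eventually_gt_nhds ha).filter_mono nhdsWithin_le_nhds)] with x (hx : x ∈ Set.Iio a) hx0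
      have h := mono x hx0
      have hax : 0 < a - x := by simpa using sub_pos.2 (Set.mem_Iio.1 hx)
      nlinarith
    exact (isSubgrad_myg_iff a p).2 ⟨ha, le_antisymm h1 h2⟩
  · exfalso
    push_neg at ha
    have hp12 : p 1 ≤ -(1/2) := by
      have h := mono 1 one_pos
      rw [Real.sqrt_one] at h
      nlinarith
    have hp1 : p 1 < 0 := by linarith
    set x0 : ℝ := (1 / (4 * p 1)) ^ 2 with hx0def
    have h4 : 1 / (4 * p 1) ≠ 0 := div_ne_zero one_ne_zero (by linarith)
    have hx0 : 0 < x0 := pow_two_pos_of_ne_zero h4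
    have hsq : Real.sqrt x0 = -(1 / (4 * p 1)) := by
      rw [hx0def, Real.sqrt_sq_eq_abs, abs_of_neg (by
        have : 4 * p 1 < 0 := by linarith
        exact div_neg_of_pos_of_neg one_pos this)]
    have h := mono x0 hx0
    rw [hsq] at h
    have e : 1 / (2 * -(1 / (4 * p 1))) = -(2 * p 1) := by
      field_simp
      ring
    rw [e] at h
    -- h : 0 ≤ (p 1 + -(2 * p 1)) * (a - x0) = (-(p 1)) * (a - x0)
    nlinarith

lemma mem_epi_iff {u r : ℝ} : myg u ≤ (r : EReal) ↔ 0 < u ∧ -Real.sqrt u ≤ r := by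
  by_cases h : 0 < u
  · rw [myg_pos h, EReal.coe_le_coe_iff]
    simp [h]
  · rw [myg_nonpos h]
    simp only [h, false_and, iff_false, top_le_iff]
    exact fun hh => (EReal.coe_ne_top r hh)

lemma myg_convex : ConvexEpi myg := by
  rintro ⟨u, r1⟩ hu ⟨v, r2⟩ hv α β hα hβ hab
  rw [Set.mem_setOf_eq, mem_epi_iff] at hu hv ⊢
  dsimp only at hu hv ⊢
  obtain ⟨hu0, hur⟩ := hu
  obtain ⟨hv0, hvr⟩ := hv
  simp only [Prod.smul_fst, Prod.smul_snd, Prod.fst_add, Prod.snd_add, smul_eq_mul]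
  have hw : 0 < α * u + β * v := by
    rcases eq_or_lt_of_le hα with rfl | hα'
    · simpa [show β = 1 by linarith] using hv0
    · exact add_pos_of_pos_of_nonneg (mul_pos hα' hu0) (mul_nonneg hβ hv0.le)
  refine ⟨hw, ?_⟩
  have hs : Real.sqrt u ^ 2 = u := Real.sq_sqrt hu0.le
  have ht : Real.sqrt v ^ 2 = v := Real.sq_sqrt hv0.le
  have hsn : 0 ≤ Real.sqrt u := Real.sqrt_nonneg u
  have htn : 0 ≤ Real.sqrt v := Real.sqrt_nonneg v
  have hkey : α * Real.sqrt u + β * Real.sqrt v ≤ Real.sqrt (α * u + β * v) := by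
    rw [show α * Real.sqrt u + β * Real.sqrt v = Real.sqrt ((α * Real.sqrt u + β * Real.sqrt v)^2)
      from (Real.sqrt_sq (by positivity)).symm]
    apply Real.sqrt_le_sqrt
    have e : α * u + β * v - (α * Real.sqrt u + β * Real.sqrt v) ^ 2
        = α * β * (Real.sqrt u - Real.sqrt v) ^ 2 := by
      linear_combination (-α) * hs + (-β) * ht
        - (α * Real.sqrt u ^ 2 + β * Real.sqrt v ^ 2) * hab
    nlinarith [mul_nonneg (mul_nonneg hα hβ) (sq_nonneg (Real.sqrt u - Real.sqrt v))]
  have h1 : α * (-Real.sqrt u) ≤ α * r1 := mul_le_mul_of_nonneg_left hur hα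
  have h2 : β * (-Real.sqrt v) ≤ β * r2 := mul_le_mul_of_nonneg_left hvr hβ
  linarith

lemma myg_not_lsc : ¬ LowerSemicontinuous myg := by
  intro h
  have htop : (0 : EReal) < myg 0 := by
    rw [myg_nonpos (lt_irrefl 0)]
    exact lt_of_lt_of_le (by norm_num) le_rfl
  have h0 := h 0 0 htop
  obtain ⟨x, hx1, hx2⟩ :=
    ((h0.filter_mono (nhdsWithin_le_nhds (s := Set.Ioi (0:ℝ)))).and self_mem_nhdsWithin).exists
  have hx : (0 : ℝ) < x := hx2
  rw [myg_pos hx] at hx1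
  have : (0 : ℝ) < -Real.sqrt x := by exact_mod_cast hx1
  nlinarith [Real.sqrt_nonneg x]


theorem exists_nonlsc_convex_with_maxMonotone_subdiff :
    ∃ g : ℝ → EReal, (∀ x, g x ≠ ⊥) ∧ ProperE g ∧ ConvexEpi g ∧
      ¬ LowerSemicontinuous g ∧ MaxMonotoneSet (graphSub g) := by
  refine ⟨myg, ?_, ?_, myg_convex, myg_not_lsc, myg_monotone, myg_max⟩
  · intro x
    by_cases hx : 0 < x
    · rw [myg_pos hx]; exact EReal.coe_ne_bot _
    · rw [myg_nonpos hx]; exact top_ne_bot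
  · refine ⟨⟨1, ?_⟩, ?_⟩
    · rw [myg_pos one_pos]; exact EReal.coe_ne_top _
    · intro x
      by_cases hx : 0 < x
      · rw [myg_pos hx]; exact EReal.coe_ne_bot _
      · rw [myg_nonpos hx]; exact top_ne_bot
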